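/- Let R be a commutative ring and let a, b, c, a′, b′, c′, x be elements of R such that a·x² + b·x + c = 0 and a′·x² + b′·x + c′ = 0. Then (a·b′ − a′·b)·(b·c′ − b′·c) = (a·c′ − a′·c)². -/
import Mathlib


/-- Bézout's 1764 resultant of two quadratic equations: if `x` is a common root of
`a·x² + b·x + c = 0` and `a′·x² + b′·x + c′ = 0`, then
`(a·b′ − a′·b)·(b·c′ − b′·c) = (a·c′ − a′·c)²`. -/
theorem bezoutian_quadratics {R : Type*} [CommRing R] (a b c a' b' c' x : R)
    (h1 : a * x ^ 2 + b * x + c = 0) (h2 : a' * x ^ 2 + b' * x + c' = 0) :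
    (a * b' - a' * b) * (b * c' - b' * c) = (a * c' - a' * c) ^ 2 := by
  linear_combination
    -((a*b'-a'*b)*((a'*x+b')*h1-(a*x+b)*h2) + (a'*c-a*c')*(a'*h1-a*h2))
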